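/- Let A be a C*-algebra with the ideal property and let α : G → Aut(A) be a continuous action of a connected Hausdorff topological group G. Then every closed ideal of A is G-invariant; in particular, the action of G on Prim(A) is trivial, and if the action is minimal then A is simple. -/

import Mathlib

open Set

/-- Key lemma: if `p` lies in a two-sided ideal `I` of a C*-algebra and `q` is a
projection with `‖q - p‖ < 1`, then `q ∈ I`. -/
theorem proj_mem_of_close {A : Type*}
    [NormedRing A] [StarRing A] [CStarRing A] [CompleteSpace A]
    [NormedAlgebra ℂ A] [StarModule ℂ A]
    (I : TwoSidedIdeal A) (p q : A) (hp : p ∈ I)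
    (hqsa : IsSelfAdjoint q) (hqid : IsIdempotentElem q)
    (hclose : ‖q - p‖ < 1) : q ∈ I := by
  have hqq : q * q = q := hqid
  -- ‖q‖ ≤ 1
  have hq1 : ‖q‖ ≤ 1 := by
    have h1 : ‖star q * q‖ = ‖q‖ * ‖q‖ := CStarRing.norm_star_mul_self
    rw [hqsa.star_eq, hqq] at h1
    nlinarith [norm_nonneg q]
  set e : A := q - q * p * q with he_def
  have he_eq : e = q * (q - p) * q := by
    rw [he_def]; simp only [mul_sub, sub_mul, ← mul_assoc, hqq]
  have he : ‖e‖ < 1 := by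
    calc ‖e‖ = ‖q * (q - p) * q‖ := by rw [he_eq]
      _ ≤ ‖q * (q - p)‖ * ‖q‖ := norm_mul_le _ _
      _ ≤ ‖q‖ * ‖q - p‖ * ‖q‖ :=
          mul_le_mul_of_nonneg_right (norm_mul_le _ _) (norm_nonneg q)
      _ ≤ 1 * ‖q - p‖ * 1 := by
          gcongr
      _ < 1 := by simpa using hclose
  set u : Aˣ := Units.oneSub e he with hu
  have hqe : q * e = e := by
    rw [he_def]; simp only [mul_sub, ← mul_assoc, hqq]
  have hq_eq : q = (q * p * q) * ↑u⁻¹ := by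
    have h1 : q * ↑u = q * p * q := by
      have : (u : A) = 1 - e := rfl
      rw [this, mul_sub, mul_one, hqe, he_def, sub_sub_cancel]
    calc q = q * (↑u * ↑u⁻¹) := by rw [u.mul_inv, mul_one]
      _ = (q * ↑u) * ↑u⁻¹ := by rw [mul_assoc]
      _ = (q * p * q) * ↑u⁻¹ := by rw [h1]
  rw [hq_eq]
  exact I.mul_mem_right _ _ (I.mul_mem_right _ _ (I.mul_mem_left _ _ hp))

/-- Let `A` be a C*-algebra with the ideal property (every closed two-sided ideal is
generated as a closed ideal by the projections it contains) and let `α` be a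
continuous action of a connected Hausdorff topological group `G` on `A` by
*-automorphisms. Then every closed ideal of `A` is `G`-invariant (so the action on
`Prim(A)` is trivial), and if the action is minimal then `A` is simple. -/
theorem ideal_property_connected_group_action
    {G A : Type*} [Group G] [TopologicalSpace G] [IsTopologicalGroup G]
    [ConnectedSpace G] [T2Space G]
    [NormedRing A] [StarRing A] [CStarRing A] [CompleteSpace A]
    [NormedAlgebra ℂ A] [StarModule ℂ A]
    -- the ideal property
    (hip : ∀ I : TwoSidedIdeal A, IsClosed (I : Set A) →
      (I : Set A) =
        closure (TwoSidedIdeal.span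
          {p : A | p ∈ I ∧ IsSelfAdjoint p ∧ IsIdempotentElem p} : Set A))
    -- a continuous action of `G` on `A` by *-automorphisms
    (α : G → A ≃⋆ₐ[ℂ] A)
    (hone : ∀ a : A, α 1 a = a)
    (hmul : ∀ g h : G, ∀ a : A, α (g * h) a = α g (α h a))
    (hcont : ∀ a : A, Continuous fun g : G => α g a) :
    (∀ I : TwoSidedIdeal A, IsClosed (I : Set A) → ∀ g : G,
      (α g) '' (I : Set A) = (I : Set A)) ∧
    ((∀ I : TwoSidedIdeal A, IsClosed (I : Set A) →
        (∀ g : G, (α g) '' (I : Set A) = (I : Set A)) → I = ⊥ ∨ I = ⊤) →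
      ∀ I : TwoSidedIdeal A, IsClosed (I : Set A) → I = ⊥ ∨ I = ⊤) := by
  letI : CStarAlgebra A := {}
  -- projections in a projection: invariance of projections
  have proj_inv : ∀ I : TwoSidedIdeal A, IsClosed (I : Set A) →
      ∀ p : A, p ∈ I → IsSelfAdjoint p → IsIdempotentElem p →
      ∀ g : G, α g p ∈ I := by
    intro I hI p hp hsa hid g
    have hsa' : ∀ h : G, IsSelfAdjoint (α h p) := fun h => by
      simpa [IsSelfAdjoint, ← map_star] using congrArg (α h) hsa.star_eq
    have hid' : ∀ h : G, IsIdempotentElem (α h p) := fun h => by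
      simpa [IsIdempotentElem, ← map_mul] using congrArg (α h) (hid : p * p = p)
    set T : Set G := (fun h : G => α h p) ⁻¹' (I : Set A) with hT
    have hTclosed : IsClosed T := hI.preimage (hcont p)
    have hTopen : IsOpen T := by
      rw [isOpen_iff_mem_nhds]
      intro g₀ hg₀
      have hball : (fun h : G => α h p) ⁻¹' Metric.ball (α g₀ p) 1 ∈ nhds g₀ :=
        (hcont p).continuousAt.preimage_mem_nhds
          (Metric.ball_mem_nhds _ one_pos)
      filter_upwards [hball] with h hh
      have hdist : ‖α h p - α g₀ p‖ < 1 := by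
        simpa [Metric.mem_ball, dist_eq_norm] using hh
      exact proj_mem_of_close I (α g₀ p) (α h p) hg₀ (hsa' h) (hid' h) hdist
    have hone' : (1 : G) ∈ T := by
      simp only [hT, mem_preimage, SetLike.mem_coe, hone]
      exact hp
    have : T = univ := IsClopen.eq_univ ⟨hTclosed, hTopen⟩ ⟨1, hone'⟩
    have hgT : g ∈ T := this ▸ mem_univ g
    exact hgT
  -- every element of a closed ideal stays in it
  have sub : ∀ I : TwoSidedIdeal A, IsClosed (I : Set A) → ∀ g : G,
      ∀ a ∈ I, α g a ∈ I := by
    intro I hI g a ha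
    set J : TwoSidedIdeal A := TwoSidedIdeal.comap (α g) I with hJ
    have hJset : (J : Set A) = (α g) ⁻¹' (I : Set A) := by
      ext x; simp [hJ, TwoSidedIdeal.mem_comap]
    have hJclosed : IsClosed (J : Set A) := by
      rw [hJset]
      exact hI.preimage (NonUnitalStarAlgHom.isometry (α g) (α g).injective).continuous
    have hPJ : {p : A | p ∈ I ∧ IsSelfAdjoint p ∧ IsIdempotentElem p} ⊆ (J : Set A) := by
      rintro p ⟨hp, hsa, hid⟩
      rw [SetLike.mem_coe, TwoSidedIdeal.mem_comap]
      exact proj_inv I hI p hp hsa hid g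
    have hspan : (TwoSidedIdeal.span
        {p : A | p ∈ I ∧ IsSelfAdjoint p ∧ IsIdempotentElem p} : Set A) ⊆ (J : Set A) := by
      intro x hx
      rw [SetLike.mem_coe] at hx ⊢
      exact TwoSidedIdeal.mem_span_iff.mp hx J hPJ
    have haJ : a ∈ (J : Set A) := by
      have ha' : a ∈ (I : Set A) := ha
      rw [hip I hI] at ha'
      exact closure_minimal hspan hJclosed ha'
    rw [SetLike.mem_coe, TwoSidedIdeal.mem_comap] at haJ
    exact haJ
  have first : ∀ I : TwoSidedIdeal A, IsClosed (I : Set A) → ∀ g : G,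
      (α g) '' (I : Set A) = (I : Set A) := by
    intro I hI g
    apply Subset.antisymm
    · rintro - ⟨a, ha, rfl⟩
      exact sub I hI g a ha
    · intro a ha
      refine ⟨α g⁻¹ a, sub I hI g⁻¹ a ha, ?_⟩
      rw [← hmul g g⁻¹ a, mul_inv_cancel, hone]
  exact ⟨first, fun hmin I hI => hmin I hI (first I hI)⟩
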